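/- Let u : ℝ → ℝ be twice continuously differentiable on [0,1] with u(0) = 0 and u(1) = 0. Then ∫₀¹ u'(x)³ dx ≤ 2√2 · (∫₀¹ u(x)² dx)^{1/4} · (∫₀¹ u'(x)² dx)^{3/4} · (∫₀¹ u''(x)² dx)^{1/2}. -/

import Mathlib

open MeasureTheory Set intervalIntegral

lemma cs_aux (f g : ℝ → ℝ) (hf : ContinuousOn f (Icc (0:ℝ) 1))
    (hg : ContinuousOn g (Icc (0:ℝ) 1)) :
    ∫ x in (0:ℝ)..1, |f x| * |g x| ≤
      (∫ x in (0:ℝ)..1, f x ^ 2) ^ ((1:ℝ)/2) * (∫ x in (0:ℝ)..1, g x ^ 2) ^ ((1:ℝ)/2) := by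
  set μ : Measure ℝ := volume.restrict (Ioc 0 1) with hμ
  haveI : IsFiniteMeasure μ := ⟨by simp [hμ, Measure.restrict_apply]⟩
  have hmem : ∀ (h : ℝ → ℝ), ContinuousOn h (Icc (0:ℝ) 1) →
      MemLp (fun x => |h x|) (ENNReal.ofReal 2) μ := by
    intro h hh
    obtain ⟨C, hC⟩ := (isCompact_Icc).exists_bound_of_continuousOn hh
    refine MemLp.of_bound ?_ C ?_
    · exact ((hh.abs.mono Ioc_subset_Icc_self).aestronglyMeasurable measurableSet_Ioc)
    · filter_upwards [ae_restrict_mem measurableSet_Ioc] with x hx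
      simpa [abs_abs] using hC x (Ioc_subset_Icc_self hx)
  have hpq : Real.HolderConjugate 2 2 := Real.HolderConjugate.two_two
  have key := MeasureTheory.integral_mul_le_Lp_mul_Lq_of_nonneg hpq
    (f := fun x => |f x|) (g := fun x => |g x|)
    (Filter.Eventually.of_forall fun x => abs_nonneg _)
    (Filter.Eventually.of_forall fun x => abs_nonneg _)
    (hmem f hf) (hmem g hg)
  have e1 : ∀ (h : ℝ → ℝ), (∫ a, |h a| ^ (2:ℝ) ∂μ) = ∫ x in (0:ℝ)..1, h x ^ 2 := by
    intro h
    rw [intervalIntegral.integral_of_le zero_le_one, hμ]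
    refine setIntegral_congr_fun measurableSet_Ioc ?_
    intro x _
    show |h x| ^ ((2:ℕ):ℝ) = h x ^ 2
    rw [Real.rpow_natCast, sq_abs]
  rw [e1 f, e1 g] at key
  rw [intervalIntegral.integral_of_le zero_le_one]
  simpa [hμ, one_div] using key

/-- If `u` is twice continuously differentiable on `[0,1]` with `u 0 = 0` and `u 1 = 0`,
then `∫₀¹ u'³ ≤ 2√2 (∫₀¹ u²)^{1/4} (∫₀¹ u'²)^{3/4} (∫₀¹ u''²)^{1/2}`. -/
theorem integral_deriv_cubed_bound (u u' u'' : ℝ → ℝ)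
    (hderiv : ∀ x ∈ Set.Icc (0:ℝ) 1, HasDerivWithinAt u (u' x) (Set.Icc (0:ℝ) 1) x)
    (hderiv' : ∀ x ∈ Set.Icc (0:ℝ) 1, HasDerivWithinAt u' (u'' x) (Set.Icc (0:ℝ) 1) x)
    (hcont : ContinuousOn u'' (Set.Icc (0:ℝ) 1))
    (h0 : u 0 = 0) (h1 : u 1 = 0) :
    ∫ x in (0:ℝ)..1, (u' x) ^ 3 ≤
      2 * Real.sqrt 2 * (∫ x in (0:ℝ)..1, (u x) ^ 2) ^ ((1:ℝ)/4) *
        (∫ x in (0:ℝ)..1, (u' x) ^ 2) ^ ((3:ℝ)/4) *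
        (∫ x in (0:ℝ)..1, (u'' x) ^ 2) ^ ((1:ℝ)/2) := by
  have h01 : (0:ℝ) ≤ 1 := zero_le_one
  have hu : ContinuousOn u (Icc (0:ℝ) 1) := fun x hx => (hderiv x hx).continuousWithinAt
  have hu' : ContinuousOn u' (Icc (0:ℝ) 1) := fun x hx => (hderiv' x hx).continuousWithinAt
  have hii : ∀ f : ℝ → ℝ, ContinuousOn f (Icc (0:ℝ) 1) → IntervalIntegrable f volume 0 1 :=
    fun f hf => ContinuousOn.intervalIntegrable (by rwa [Set.uIcc_of_le h01])
  have hAt : ∀ x ∈ Set.Ioo (0:ℝ) 1, HasDerivAt u (u' x) x := fun x hx =>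
    (hderiv x (Ioo_subset_Icc_self hx)).hasDerivAt (Icc_mem_nhds hx.1 hx.2)
  have hAt' : ∀ x ∈ Set.Ioo (0:ℝ) 1, HasDerivAt u' (u'' x) x := fun x hx =>
    (hderiv' x (Ioo_subset_Icc_self hx)).hasDerivAt (Icc_mem_nhds hx.1 hx.2)
  set A := ∫ x in (0:ℝ)..1, (u x) ^ 2 with hA
  set B := ∫ x in (0:ℝ)..1, (u' x) ^ 2 with hB
  set C := ∫ x in (0:ℝ)..1, (u'' x) ^ 2 with hC
  have hA0 : 0 ≤ A := intervalIntegral.integral_nonneg h01 fun x _ => sq_nonneg _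
  have hB0 : 0 ≤ B := intervalIntegral.integral_nonneg h01 fun x _ => sq_nonneg _
  have hC0 : 0 ≤ C := intervalIntegral.integral_nonneg h01 fun x _ => sq_nonneg _
  -- integrabilities
  have i3 : IntervalIntegrable (fun x => (u' x)^3) volume 0 1 := hii _ (hu'.pow 3)
  have icross : IntervalIntegrable (fun x => 2 * u x * u' x * u'' x) volume 0 1 :=
    hii _ (((continuousOn_const.mul hu).mul hu').mul hcont)
  have iabs : IntervalIntegrable (fun x => |u x * u' x| * |u'' x|) volume 0 1 :=
    hii _ ((hu.mul hu').abs.mul hcont.abs)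
  -- integration by parts via FTC
  have hIBP : ∫ x in (0:ℝ)..1, ((u' x)^3 + 2 * u x * u' x * u'' x) = 0 := by
    rw [intervalIntegral.integral_eq_sub_of_hasDeriv_right_of_le h01
      (hu.mul (hu'.pow 2))
      (fun x hx => by
        have := (hAt x hx).mul ((hAt' x hx).pow 2)
        have h2 : u' x * u' x ^ 2 + u x * (↑2 * u' x ^ (2-1) * u'' x)
            = (u' x)^3 + 2 * u x * u' x * u'' x := by push_cast; ring
        exact (h2 ▸ this).hasDerivWithinAt)
      (i3.add icross)]
    simp [h0, h1]
  have hsplit : ∫ x in (0:ℝ)..1, (u' x)^3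
      = - ∫ x in (0:ℝ)..1, 2 * u x * u' x * u'' x := by
    rw [intervalIntegral.integral_add i3 icross] at hIBP; linarith
  -- bound by absolute values
  have habs : (- ∫ x in (0:ℝ)..1, 2 * u x * u' x * u'' x)
      ≤ 2 * ∫ x in (0:ℝ)..1, |u x * u' x| * |u'' x| := by
    rw [← intervalIntegral.integral_neg, ← intervalIntegral.integral_const_mul]
    refine intervalIntegral.integral_mono_on h01 icross.neg (iabs.const_mul 2) ?_
    intro x _
    have h1 : -(u x * u' x * u'' x) ≤ |u x * u' x| * |u'' x| := by
      rw [← abs_mul]; exact neg_le_abs _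
    have h2 : -(2 * u x * u' x * u'' x) = 2 * -(u x * u' x * u'' x) := by ring
    calc (fun x => -(2 * u x * u' x * u'' x)) x = 2 * -(u x * u' x * u'' x) := h2
    _ ≤ 2 * (|u x * u' x| * |u'' x|) := by linarith
  -- Cauchy-Schwarz on |u u'| * |u''|
  have hcs1 : ∫ x in (0:ℝ)..1, |u x * u' x| * |u'' x|
      ≤ (∫ x in (0:ℝ)..1, (u x * u' x) ^ 2) ^ ((1:ℝ)/2) * C ^ ((1:ℝ)/2) :=
    cs_aux (fun x => u x * u' x) u'' (hu.mul hu') hcont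
  -- Cauchy-Schwarz on |u| * |u'|
  have hcs2 : ∫ x in (0:ℝ)..1, |u x| * |u' x| ≤ A ^ ((1:ℝ)/2) * B ^ ((1:ℝ)/2) :=
    cs_aux u u' hu hu'
  -- pointwise bound on u^2
  have hsq : ∀ x ∈ Icc (0:ℝ) 1, (u x)^2 ≤ 2 * (A ^ ((1:ℝ)/2) * B ^ ((1:ℝ)/2)) := by
    intro x hx
    have hsubI : Icc (0:ℝ) x ⊆ Icc (0:ℝ) 1 := Icc_subset_Icc le_rfl hx.2
    have hsubU : Set.uIcc (0:ℝ) x ⊆ Set.uIcc (0:ℝ) 1 := by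
      rw [Set.uIcc_of_le hx.1, Set.uIcc_of_le h01]; exact hsubI
    have hftc : ∫ t in (0:ℝ)..x, 2 * u t * u' t = u x ^ 2 - u 0 ^ 2 := by
      refine intervalIntegral.integral_eq_sub_of_hasDeriv_right_of_le hx.1
        ((hu.mono hsubI).pow 2)
        (fun t ht => ?_)
        (((hii _ ((continuousOn_const.mul hu).mul hu')).mono_set hsubU))
      have ht' : t ∈ Set.Ioo (0:ℝ) 1 := ⟨ht.1, lt_of_lt_of_le ht.2 hx.2⟩
      have := (hAt t ht').pow 2
      have h2 : (↑2 : ℝ) * u t ^ (2-1) * u' t = 2 * u t * u' t := by push_cast; ring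
      exact (h2 ▸ this).hasDerivWithinAt
    have s1 : ∫ t in (0:ℝ)..x, 2 * u t * u' t
        ≤ ∫ t in (0:ℝ)..x, 2 * (|u t| * |u' t|) := by
      refine intervalIntegral.integral_mono_on hx.1
        (((hii _ ((continuousOn_const.mul hu).mul hu'))).mono_set hsubU)
        (((hii _ (continuousOn_const.mul (hu.abs.mul hu'.abs)))).mono_set hsubU) ?_
      intro t _
      have := le_abs_self (u t * u' t)
      rw [abs_mul] at this; linarith
    have s2 : ∫ t in (0:ℝ)..x, 2 * (|u t| * |u' t|)
        ≤ ∫ t in (0:ℝ)..1, 2 * (|u t| * |u' t|) := by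
      refine intervalIntegral.integral_mono_interval le_rfl hx.1 hx.2 ?_
        (hii _ (continuousOn_const.mul (hu.abs.mul hu'.abs)))
      filter_upwards with t
      positivity
    have s3 : ∫ t in (0:ℝ)..1, 2 * (|u t| * |u' t|)
        ≤ 2 * (A ^ ((1:ℝ)/2) * B ^ ((1:ℝ)/2)) := by
      rw [intervalIntegral.integral_const_mul]
      linarith
    have := hftc
    rw [h0] at this
    nlinarith [this]
  -- bound the middle integral
  have hmid : ∫ x in (0:ℝ)..1, (u x * u' x) ^ 2
      ≤ 2 * (A ^ ((1:ℝ)/2) * B ^ ((1:ℝ)/2)) * B := by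
    rw [hB, ← intervalIntegral.integral_const_mul]
    refine intervalIntegral.integral_mono_on h01 (hii _ ((hu.mul hu').pow 2))
      ((hii _ (hu'.pow 2)).const_mul _) ?_
    intro x hx
    have := mul_le_mul_of_nonneg_right (hsq x hx) (sq_nonneg (u' x))
    calc (u x * u' x)^2 = u x ^2 * u' x ^2 := by ring
    _ ≤ 2 * (A ^ ((1:ℝ)/2) * B ^ ((1:ℝ)/2)) * u' x ^ 2 := this
  -- assemble
  have hmono : (∫ x in (0:ℝ)..1, (u x * u' x) ^ 2) ^ ((1:ℝ)/2)
      ≤ (2 * (A ^ ((1:ℝ)/2) * B ^ ((1:ℝ)/2)) * B) ^ ((1:ℝ)/2) :=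
    Real.rpow_le_rpow (intervalIntegral.integral_nonneg h01 fun x _ => sq_nonneg _)
      hmid (by norm_num)
  have hfin : (2 * (A ^ ((1:ℝ)/2) * B ^ ((1:ℝ)/2)) * B) ^ ((1:ℝ)/2)
      = Real.sqrt 2 * A ^ ((1:ℝ)/4) * B ^ ((3:ℝ)/4) := by
    have hBB : B ^ ((1:ℝ)/2) * B = B ^ ((3:ℝ)/2) := by
      nth_rewrite 2 [← Real.rpow_one B]
      rw [← Real.rpow_add' hB0 (by norm_num)]
      norm_num
    rw [mul_assoc, mul_assoc, hBB, Real.sqrt_eq_rpow,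
      Real.mul_rpow (by norm_num) (by positivity),
      Real.mul_rpow (by positivity) (by positivity),
      ← Real.rpow_mul hA0, ← Real.rpow_mul hB0]
    norm_num
    ring
  have hC2 : (0:ℝ) ≤ C ^ ((1:ℝ)/2) := by positivity
  calc ∫ x in (0:ℝ)..1, (u' x)^3
      = - ∫ x in (0:ℝ)..1, 2 * u x * u' x * u'' x := hsplit
    _ ≤ 2 * ∫ x in (0:ℝ)..1, |u x * u' x| * |u'' x| := habs
    _ ≤ 2 * ((∫ x in (0:ℝ)..1, (u x * u' x) ^ 2) ^ ((1:ℝ)/2) * C ^ ((1:ℝ)/2)) := by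
        linarith
    _ ≤ 2 * ((2 * (A ^ ((1:ℝ)/2) * B ^ ((1:ℝ)/2)) * B) ^ ((1:ℝ)/2) * C ^ ((1:ℝ)/2)) := by
        have := mul_le_mul_of_nonneg_right hmono hC2
        linarith
    _ = 2 * Real.sqrt 2 * A ^ ((1:ℝ)/4) * B ^ ((3:ℝ)/4) * C ^ ((1:ℝ)/2) := by
        rw [hfin]; ring
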